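/- Let β > 0, ν > 0, ε > 0, t₀ ≥ 0, and let X = (X_n)_{n≥1} be a weak solution of the viscous dyadic model on [t₀,∞) with X_n(t) ≥ 0 for all n and t, such that sup_{n≥1} (λ_n^{β-2+ε} X_n(t₀)) < ∞. Then there exists t₀' > t₀ such that X is smooth on (t₀, t₀'], i.e. for every γ > 0 and every t ∈ (t₀, t₀'], sup_{n≥1} (λ_n^γ X_n(t)) < ∞. -/

import Mathlib

/-- The dyadic frequencies: `λ_0 = 0`, `λ_n = 2^n` for `n ≥ 1`. -/
noncomputable def lam (n : ℕ) : ℝ := if n = 0 then 0 else 2 ^ n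

/-- `X` is a weak solution of the viscous dyadic model with parameter `β` and
viscosity `ν` on the interval `I`. -/
def IsViscousSolution (β ν : ℝ) (I : Set ℝ) (X : ℕ → ℝ → ℝ) : Prop :=
  ∀ n, 1 ≤ n → ∀ t ∈ I, HasDerivWithinAt (X n)
    (-ν * lam n ^ 2 * X n t + lam (n - 1) ^ β * (X (n - 1) t) ^ 2
      - lam n ^ β * X n t * X (n + 1) t) I t



open Real Set

/-- `2^x` as rpow. -/
noncomputable def tp (x : ℝ) : ℝ := (2:ℝ) ^ x

lemma tp_pos (x : ℝ) : 0 < tp x := Real.rpow_pos_of_pos (by norm_num) x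

lemma tp_add (x y : ℝ) : tp (x + y) = tp x * tp y := Real.rpow_add (by norm_num) x y

lemma tp_mono {x y : ℝ} (h : x ≤ y) : tp x ≤ tp y :=
  Real.rpow_le_rpow_of_exponent_le (by norm_num) h

lemma lam_eq {n : ℕ} (h : 1 ≤ n) : lam n = tp n := by
  simp only [lam, if_neg (by omega : n ≠ 0), tp]
  rw [Real.rpow_natCast]

lemma lam_rpow {n : ℕ} (h : 1 ≤ n) (a : ℝ) : lam n ^ a = tp (n * a) := by
  rw [lam_eq h, tp, tp, ← Real.rpow_mul (by norm_num)]

lemma lam_sq {n : ℕ} (h : 1 ≤ n) : lam n ^ (2:ℕ) = tp (2 * n) := by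
  rw [lam_eq h, tp, tp, ← Real.rpow_natCast (_ ^ _) 2, ← Real.rpow_mul (by norm_num)]
  norm_num
  ring_nf

lemma tp_neg (x : ℝ) : tp (-x) = (tp x)⁻¹ := Real.rpow_neg (by norm_num) x

lemma lam_nonneg (n : ℕ) : 0 ≤ lam n := by
  rcases Nat.eq_zero_or_pos n with h | h
  · simp [lam, h]
  · rw [lam_eq h]; exact (tp_pos _).le

/-- Exponential comparison: if `f' ≤ -c f + B` then `f t ≤ e^{-c(t-s)} f s + B/c`. -/
lemma comp_exp {t₀ s t c B : ℝ} {f d : ℝ → ℝ}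
    (hs : t₀ ≤ s) (hst : s ≤ t) (hc : 0 < c) (hB : 0 ≤ B)
    (hderiv : ∀ u ∈ Icc s t, HasDerivWithinAt f (d u) (Ici t₀) u)
    (hd : ∀ u ∈ Icc s t, d u ≤ -c * f u + B) :
    f t ≤ Real.exp (-(c * (t - s))) * f s + B / c := by
  set g : ℝ → ℝ := fun u => (f u - B / c) * Real.exp (c * (u - s)) with hg
  have hfc : ContinuousOn f (Icc s t) := fun u hu =>
    ((hderiv u hu).continuousWithinAt).mono (fun x hx => le_trans hs hx.1)
  have hgc : ContinuousOn g (Icc s t) := by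
    apply ContinuousOn.mul (hfc.sub continuousOn_const)
    exact (Real.continuous_exp.comp (by continuity)).continuousOn
  have hgd : ∀ u ∈ Ioo s t, HasDerivAt g
      (d u * Real.exp (c * (u - s)) + (f u - B / c) * (Real.exp (c * (u - s)) * c)) u := by
    intro u hu
    have hfd : HasDerivAt f (d u) u := by
      refine (hderiv u ⟨hu.1.le, hu.2.le⟩).hasDerivAt ?_
      exact Ici_mem_nhds (lt_of_le_of_lt hs hu.1)
    have he : HasDerivAt (fun u => Real.exp (c * (u - s))) (Real.exp (c * (u - s)) * c) u := by
      have : HasDerivAt (fun u : ℝ => c * (u - s)) c u := by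
        simpa using ((hasDerivAt_id u).sub_const s).const_mul c
      simpa using this.exp
    exact (hfd.sub_const (B / c)).mul he
  have hanti : AntitoneOn g (Icc s t) := by
    apply antitoneOn_of_deriv_nonpos (convex_Icc s t) hgc
    · intro u hu
      rw [interior_Icc] at hu
      exact ((hgd u hu).differentiableAt).differentiableWithinAt
    · intro u hu
      rw [interior_Icc] at hu
      rw [(hgd u hu).deriv]
      have h1 := hd u ⟨hu.1.le, hu.2.le⟩
      have h2 : (0:ℝ) < Real.exp (c * (u - s)) := Real.exp_pos _
      have : d u * Real.exp (c * (u - s)) + (f u - B / c) * (Real.exp (c * (u - s)) * c)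
          = Real.exp (c * (u - s)) * (d u + c * f u - B) := by
        field_simp
        ring
      rw [this]
      apply mul_nonpos_of_nonneg_of_nonpos h2.le
      linarith
  have hle : g t ≤ g s := hanti ⟨le_refl s, hst⟩ ⟨hst, le_refl t⟩ hst
  have hgs : g s = f s - B / c := by simp [hg]
  have hE : Real.exp (-(c * (t - s))) * Real.exp (c * (t - s)) = 1 := by
    rw [← Real.exp_add]; simp
  have hE1 : (0:ℝ) < Real.exp (-(c * (t - s))) := Real.exp_pos _
  have hE2 : (0:ℝ) < Real.exp (c * (t - s)) := Real.exp_pos _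
  have hBc : 0 ≤ B / c := div_nonneg hB hc.le
  rw [hgs] at hle
  simp only [hg] at hle
  have key : Real.exp (-(c * (t - s))) * ((f t - B / c) * Real.exp (c * (t - s)))
      = f t - B / c := by
    rw [mul_comm, mul_assoc, mul_comm (Real.exp (c * (t - s))), hE, mul_one]
  have h4 := mul_le_mul_of_nonneg_left hle hE1.le
  rw [key, mul_sub] at h4
  have h5 : 0 ≤ Real.exp (-(c * (t - s))) * (B / c) := mul_nonneg hE1.le hBc
  linarith

/-- Linear comparison: if `f' ≤ B` then `f t ≤ f s + B (t-s)`. -/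
lemma comp_lin {t₀ s t B : ℝ} {f d : ℝ → ℝ}
    (hs : t₀ ≤ s) (hst : s ≤ t)
    (hderiv : ∀ u ∈ Icc s t, HasDerivWithinAt f (d u) (Ici t₀) u)
    (hd : ∀ u ∈ Icc s t, d u ≤ B) :
    f t ≤ f s + B * (t - s) := by
  set g : ℝ → ℝ := fun u => f u - B * u with hg
  have hfc : ContinuousOn f (Icc s t) := fun u hu =>
    ((hderiv u hu).continuousWithinAt).mono (fun x hx => le_trans hs hx.1)
  have hgc : ContinuousOn g (Icc s t) := hfc.sub (by fun_prop)
  have hgd : ∀ u ∈ Ioo s t, HasDerivAt g (d u - B) u := by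
    intro u hu
    have hfd : HasDerivAt f (d u) u := by
      refine (hderiv u ⟨hu.1.le, hu.2.le⟩).hasDerivAt ?_
      exact Ici_mem_nhds (lt_of_le_of_lt hs hu.1)
    exact (hfd.sub ((hasDerivAt_id u).const_mul B)).congr_deriv (by ring)
  have hanti : AntitoneOn g (Icc s t) := by
    apply antitoneOn_of_deriv_nonpos (convex_Icc s t) hgc
    · intro u hu
      rw [interior_Icc] at hu
      exact ((hgd u hu).differentiableAt).differentiableWithinAt
    · intro u hu
      rw [interior_Icc] at hu
      rw [(hgd u hu).deriv]
      linarith [hd u ⟨hu.1.le, hu.2.le⟩]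
  have hle : g t ≤ g s := hanti ⟨le_refl s, hst⟩ ⟨hst, le_refl t⟩ hst
  simp only [hg] at hle
  linarith

lemma stage1 {β ν ε t₀ C : ℝ} {X : ℕ → ℝ → ℝ} (hβ : 0 < β) (hν : 0 < ν) (hε : 0 < ε)
    (hX : IsViscousSolution β ν (Ici t₀) X)
    (hpos : ∀ n, 1 ≤ n → ∀ t ∈ Ici t₀, 0 ≤ X n t)
    (hC0 : 0 ≤ C)
    (hC : ∀ n, 1 ≤ n → X n t₀ ≤ C * tp (-(n * (β - 2 + ε)))) :
    ∃ δ : ℝ, 0 < δ ∧ ∀ n, 1 ≤ n → ∀ t ∈ Icc t₀ (t₀ + δ),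
      X n t ≤ (C + 1) * tp (-(n * (β - 2 + ε))) := by
  obtain ⟨a, ha⟩ : ∃ a : ℝ, a = β - 2 + ε := ⟨_, rfl⟩
  rw [← ha] at hC ⊢
  set K : ℝ := C + 1 with hKdef
  have hK : (0:ℝ) < K := by positivity
  have hCK : C ≤ K := by linarith
  -- choose N
  obtain ⟨N, hN⟩ := pow_unbounded_of_one_lt (K ^ 2 * tp (β - 4 + 2 * ε) / ν)
    ((Real.one_lt_rpow_iff_of_pos (by norm_num)).mpr (Or.inl ⟨one_lt_two, hε⟩) :
      (1:ℝ) < tp ε)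
  have hN' : K ^ 2 * tp (β - 4 + 2 * ε) < ν * tp (N * ε) := by
    have h1 : ((2:ℝ) ^ ε) ^ N = tp (↑N * ε) := by
      rw [tp, ← Real.rpow_natCast ((2:ℝ) ^ ε) N, ← Real.rpow_mul (by norm_num)]
      ring_nf
    rw [div_lt_iff₀ hν, h1] at hN
    linarith
  -- choose δ
  set δ : ℝ := min 1 (tp (-(β + 2 * ε + 2 * N)) / K ^ 2) with hδdef
  have hδ : 0 < δ := lt_min one_pos (div_pos (tp_pos _) (by positivity))
  refine ⟨δ, hδ, ?_⟩
  intro n hn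
  induction n, hn using Nat.le_induction with
  | base =>
    intro t ht
    have hd : ∀ u ∈ Icc t₀ t, (-ν * lam 1 ^ 2 * X 1 u + lam (1-1) ^ β * (X (1-1) u) ^ 2
        - lam 1 ^ β * X 1 u * X (1+1) u) ≤ (0:ℝ) := by
      intro u hu
      have hu0 : u ∈ Ici t₀ := hu.1
      have h0 : lam (1-1) = 0 := by simp [lam]
      rw [h0, Real.zero_rpow hβ.ne', zero_mul]
      have h1 : 0 ≤ X 1 u := hpos 1 le_rfl u hu0
      have h2 : 0 ≤ X 2 u := hpos 2 (by norm_num) u hu0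
      have h3 : 0 ≤ lam 1 ^ (2:ℕ) := by positivity
      have h4 : (0:ℝ) ≤ lam 1 ^ β := Real.rpow_nonneg (lam_nonneg 1) β
      nlinarith [mul_nonneg (mul_nonneg hν.le h3) h1, mul_nonneg (mul_nonneg h4 h1) h2]
    have h := comp_lin (t₀ := t₀) le_rfl ht.1
      (fun u hu => hX 1 le_rfl u hu.1) hd
    have h2 := hC 1 le_rfl
    have h3 : 0 ≤ tp (-(↑(1:ℕ) * a)) := (tp_pos _).le
    nlinarith
  | succ n hn ih =>
    intro t ht
    -- source bound
    set B' : ℝ := K ^ 2 * tp (↑n * (β - 2 * a)) with hB'def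
    have hB' : 0 ≤ B' := mul_nonneg (sq_nonneg K) (tp_pos _).le
    have hsrc : ∀ u ∈ Icc t₀ (t₀ + δ), lam n ^ β * X n u ^ 2 ≤ B' := by
      intro u hu
      have h1 : 0 ≤ X n u := hpos n hn u hu.1
      have h2 : X n u ≤ K * tp (-(↑n * a)) := ih u hu
      have h3 : X n u ^ 2 ≤ (K * tp (-(↑n * a))) ^ 2 := by nlinarith
      have h4 : lam n ^ β = tp (↑n * β) := lam_rpow hn β
      have h5 : tp (↑n * β) * (K * tp (-(↑n * a))) ^ 2 = B' := by
        rw [hB'def, mul_pow, sq (tp (-(↑n * a))), ← tp_add, mul_left_comm, ← tp_add]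
        congr 1
        ring
      rw [h4]
      calc tp (↑n * β) * X n u ^ 2 ≤ tp (↑n * β) * (K * tp (-(↑n * a))) ^ 2 :=
            mul_le_mul_of_nonneg_left h3 (tp_pos _).le
        _ = B' := h5
    set c : ℝ := ν * tp (2 * (↑n + 1)) with hcdef
    have hc : 0 < c := mul_pos hν (tp_pos _)
    have hlamsq : lam (n+1) ^ (2:ℕ) = tp (2 * (↑n + 1)) := by
      rw [lam_sq (by omega)]; push_cast; ring_nf
    have hlamb : (0:ℝ) ≤ lam (n+1) ^ β := Real.rpow_nonneg (lam_nonneg _) β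
    have hderiv : ∀ u ∈ Icc t₀ t, HasDerivWithinAt (X (n+1))
        (-ν * lam (n+1) ^ 2 * X (n+1) u + lam n ^ β * (X n u) ^ 2
          - lam (n+1) ^ β * X (n+1) u * X (n+1+1) u) (Ici t₀) u := by
      intro u hu
      have := hX (n+1) (by omega) u hu.1
      simpa using this
    have hIccsub : Icc t₀ t ⊆ Icc t₀ (t₀ + δ) := Icc_subset_Icc le_rfl ht.2
    have hXt₀ : X (n+1) t₀ ≤ C * tp (-(↑(n+1) * a)) := hC (n+1) (by omega)
    have hXt₀0 : 0 ≤ X (n+1) t₀ := hpos (n+1) (by omega) t₀ self_mem_Ici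
    by_cases hcase : N ≤ n + 1
    · -- viscous regime
      have hd : ∀ u ∈ Icc t₀ t, (-ν * lam (n+1) ^ 2 * X (n+1) u + lam n ^ β * (X n u) ^ 2
          - lam (n+1) ^ β * X (n+1) u * X (n+1+1) u) ≤ -c * X (n+1) u + B' := by
        intro u hu
        have h1 := hsrc u (hIccsub hu)
        have h2 : 0 ≤ X (n+1) u := hpos (n+1) (by omega) u hu.1
        have h3 : 0 ≤ X (n+1+1) u := hpos (n+1+1) (by omega) u hu.1
        have h4 : -ν * lam (n+1) ^ 2 * X (n+1) u = -c * X (n+1) u := by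
          rw [hcdef, ← hlamsq]; ring
        have hT : 0 ≤ lam (n+1) ^ β * X (n+1) u * X (n+1+1) u :=
          mul_nonneg (mul_nonneg hlamb h2) h3
        rw [sub_le_iff_le_add, h4]
        linarith only [h1, hT]
      have h := comp_exp le_rfl ht.1 hc hB' hderiv hd
      have hexp1 : Real.exp (-(c * (t - t₀))) ≤ 1 := by
        rw [Real.exp_le_one_iff]
        nlinarith [ht.1]
      have hterm1 : Real.exp (-(c * (t - t₀))) * X (n+1) t₀ ≤ C * tp (-(↑(n+1) * a)) := by
        calc Real.exp (-(c * (t - t₀))) * X (n+1) t₀ ≤ 1 * X (n+1) t₀ :=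
              mul_le_mul_of_nonneg_right hexp1 hXt₀0
          _ = X (n+1) t₀ := one_mul _
          _ ≤ C * tp (-(↑(n+1) * a)) := hXt₀
      have hterm2 : B' / c ≤ tp (-(↑(n+1) * a)) := by
        rw [div_le_iff₀ hc]
        have key : (↑N * ε) + (↑n * (β - 2 * a) - (β - 4 + 2 * ε))
            ≤ -(↑(n+1) * a) + 2 * (↑n + 1) := by
          have hNc : (N:ℝ) ≤ (n:ℝ) + 1 := by exact_mod_cast hcase
          have : (N:ℝ) * ε ≤ ((n:ℝ) + 1) * ε :=
            mul_le_mul_of_nonneg_right hNc hε.le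
          push_cast
          rw [ha]
          push_cast at this
          linarith only [this]
        calc B' = (K ^ 2 * tp (β - 4 + 2 * ε)) * tp (↑n * (β - 2 * a) - (β - 4 + 2 * ε)) := by
              rw [hB'def, mul_assoc, ← tp_add]; ring_nf
          _ ≤ (ν * tp (↑N * ε)) * tp (↑n * (β - 2 * a) - (β - 4 + 2 * ε)) :=
              mul_le_mul_of_nonneg_right hN'.le (tp_pos _).le
          _ = ν * tp ((↑N * ε) + (↑n * (β - 2 * a) - (β - 4 + 2 * ε))) := by
              rw [tp_add]; ring
          _ ≤ ν * tp (-(↑(n+1) * a) + 2 * (↑n + 1)) :=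
              mul_le_mul_of_nonneg_left (tp_mono key) hν.le
          _ = tp (-(↑(n+1) * a)) * c := by rw [hcdef, tp_add]; ring
      calc X (n+1) t ≤ Real.exp (-(c * (t - t₀))) * X (n+1) t₀ + B' / c := h
        _ ≤ C * tp (-(↑(n+1) * a)) + tp (-(↑(n+1) * a)) := add_le_add hterm1 hterm2
        _ = K * tp (-(↑(n+1) * a)) := by rw [hKdef]; ring
    · -- linear regime
      push_neg at hcase
      have hd : ∀ u ∈ Icc t₀ t, (-ν * lam (n+1) ^ 2 * X (n+1) u + lam n ^ β * (X n u) ^ 2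
          - lam (n+1) ^ β * X (n+1) u * X (n+1+1) u) ≤ B' := by
        intro u hu
        have h1 := hsrc u (hIccsub hu)
        have h2 : 0 ≤ X (n+1) u := hpos (n+1) (by omega) u hu.1
        have h3 : 0 ≤ X (n+1+1) u := hpos (n+1+1) (by omega) u hu.1
        have h4 : (0:ℝ) ≤ lam (n+1) ^ (2:ℕ) := by rw [hlamsq]; exact (tp_pos _).le
        have hT : 0 ≤ lam (n+1) ^ β * X (n+1) u * X (n+1+1) u :=
          mul_nonneg (mul_nonneg hlamb h2) h3
        have hA : 0 ≤ ν * lam (n+1) ^ 2 * X (n+1) u :=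
          mul_nonneg (mul_nonneg hν.le h4) h2
        linarith only [h1, hT, hA]
      have h := comp_lin le_rfl ht.1 hderiv hd
      have hterm2 : B' * (t - t₀) ≤ tp (-(↑(n+1) * a)) := by
        have hts : t - t₀ ≤ δ := by linarith [ht.2]
        have hts0 : 0 ≤ t - t₀ := by linarith [ht.1]
        have h1 : B' * (t - t₀) ≤ B' * (tp (-(β + 2 * ε + 2 * N)) / K ^ 2) := by
          apply mul_le_mul_of_nonneg_left _ hB'
          exact le_trans hts (min_le_right _ _)
        have h2 : B' * (tp (-(β + 2 * ε + 2 * N)) / K ^ 2)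
            = tp (↑n * (β - 2 * a) + -(β + 2 * ε + 2 * N)) := by
          rw [hB'def, tp_add]
          field_simp
        have key : ↑n * (β - 2 * a) + -(β + 2 * ε + 2 * (N:ℝ)) ≤ -(↑(n+1) * a) := by
          have hNc : (n:ℝ) + 1 ≤ (N:ℝ) := by exact_mod_cast hcase.le
          have hne : 0 ≤ ((n:ℝ) + 1) * ε := by positivity
          push_cast
          rw [ha]
          linarith only [hNc, hne]
        calc B' * (t - t₀) ≤ tp (↑n * (β - 2 * a) + -(β + 2 * ε + 2 * N)) := by
              rw [← h2]; exact h1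
          _ ≤ tp (-(↑(n+1) * a)) := tp_mono key
      calc X (n+1) t ≤ X (n+1) t₀ + B' * (t - t₀) := h
        _ ≤ C * tp (-(↑(n+1) * a)) + tp (-(↑(n+1) * a)) := add_le_add hXt₀ hterm2
        _ = K * tp (-(↑(n+1) * a)) := by rw [hKdef]; ring

lemma bootstrap {β ν ε t₀ s s' T a K : ℝ} {X : ℕ → ℝ → ℝ}
    (hβ : 0 < β) (hν : 0 < ν) (hε : 0 < ε) (hε2 : ε ≤ 2)
    (hX : IsViscousSolution β ν (Ici t₀) X)
    (hpos : ∀ n, 1 ≤ n → ∀ t ∈ Ici t₀, 0 ≤ X n t)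
    (hεa : ε ≤ a + 2 - β)
    (hts : t₀ ≤ s) (hss' : s < s') (hs'T : s' ≤ T)
    (hK : 0 ≤ K)
    (hb : ∀ n, 1 ≤ n → ∀ t ∈ Icc s T, X n t ≤ K * tp (-(n * a))) :
    ∃ K', 0 ≤ K' ∧ ∀ n, 1 ≤ n → ∀ t ∈ Icc s' T, X n t ≤ K' * tp (-(n * (a + ε))) := by
  set η : ℝ := s' - s with hηdef
  have hη : 0 < η := by simp [hηdef]; linarith
  refine ⟨K / (ν * η) + K ^ 2 / ν * tp β,
    add_nonneg (by positivity) (mul_nonneg (by positivity) (tp_pos β).le), ?_⟩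
  intro n hn t ht
  obtain ⟨m, rfl⟩ : ∃ m, n = m + 1 := ⟨n - 1, by omega⟩
  have htI : t ∈ Icc s T := ⟨le_trans hss'.le ht.1, ht.2⟩
  have hsI : s ∈ Icc s T := ⟨le_rfl, le_trans hss'.le hs'T⟩
  set c : ℝ := ν * tp (2 * (↑m + 1)) with hcdef
  have hc : 0 < c := mul_pos hν (tp_pos _)
  have hlamsq : lam (m+1) ^ (2:ℕ) = tp (2 * (↑m + 1)) := by
    rw [lam_sq (by omega)]; push_cast; ring_nf
  have hlamb : (0:ℝ) ≤ lam (m+1) ^ β := Real.rpow_nonneg (lam_nonneg _) β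
  have hst : s ≤ t := htI.1
  have hderiv : ∀ u ∈ Icc s t, HasDerivWithinAt (X (m+1))
      (-ν * lam (m+1) ^ 2 * X (m+1) u + lam m ^ β * (X m u) ^ 2
        - lam (m+1) ^ β * X (m+1) u * X (m+1+1) u) (Ici t₀) u := by
    intro u hu
    have := hX (m+1) (by omega) u (le_trans hts hu.1)
    simpa using this
  -- the decayed initial-value term
  have hXs : X (m+1) s ≤ K * tp (-(↑(m+1) * a)) := hb (m+1) (by omega) s hsI
  have hXs0 : 0 ≤ X (m+1) s := hpos (m+1) (by omega) s hts
  have hterm1 : Real.exp (-(c * (t - s))) * X (m+1) s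
      ≤ K / (ν * η) * tp (-(↑(m+1) * (a + ε))) := by
    have hηt : η ≤ t - s := by simp only [hηdef]; linarith [ht.1]
    have he1 : Real.exp (-(c * (t - s))) ≤ Real.exp (-(c * η)) := by
      apply Real.exp_le_exp.mpr
      nlinarith
    have he2 : Real.exp (-(c * η)) ≤ (c * η)⁻¹ := by
      rw [Real.exp_neg]
      apply inv_anti₀ (by positivity)
      linarith [Real.add_one_le_exp (c * η)]
    have he3 : (c * η)⁻¹ = (ν * η)⁻¹ * tp (-(2 * (↑m + 1))) := by
      rw [hcdef, tp_neg, mul_inv, mul_inv, mul_inv]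
      ring
    have he4 : tp (-(2 * (↑m + 1))) ≤ tp (-((↑m + 1) * ε)) := by
      apply tp_mono
      nlinarith
    calc Real.exp (-(c * (t - s))) * X (m+1) s
        ≤ (c * η)⁻¹ * (K * tp (-(↑(m+1) * a))) := by
          exact mul_le_mul (he1.trans he2) hXs hXs0
            (inv_nonneg.mpr (mul_pos hc hη).le)
      _ = (ν * η)⁻¹ * tp (-(2 * (↑m + 1))) * (K * tp (-(↑(m+1) * a))) := by rw [he3]
      _ ≤ (ν * η)⁻¹ * tp (-((↑m + 1) * ε)) * (K * tp (-(↑(m+1) * a))) := by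
          apply mul_le_mul_of_nonneg_right _ (mul_nonneg hK (tp_pos _).le)
          exact mul_le_mul_of_nonneg_left he4 (by positivity)
      _ = K / (ν * η) * (tp (-((↑m + 1) * ε)) * tp (-(↑(m+1) * a))) := by ring
      _ = K / (ν * η) * tp (-(↑(m+1) * (a + ε))) := by
          rw [← tp_add]
          congr 1
          push_cast
          ring
  rcases Nat.eq_zero_or_pos m with hm | hm
  · -- n = 1 : no source term
    have h0 : lam m ^ β = 0 := by
      rw [show lam m = 0 from by simp [lam, hm], Real.zero_rpow hβ.ne']
    have hd : ∀ u ∈ Icc s t, (-ν * lam (m+1) ^ 2 * X (m+1) u + lam m ^ β * (X m u) ^ 2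
        - lam (m+1) ^ β * X (m+1) u * X (m+1+1) u) ≤ -c * X (m+1) u + 0 := by
      intro u hu
      have hu0 : u ∈ Ici t₀ := le_trans hts hu.1
      have h2 : 0 ≤ X (m+1) u := hpos (m+1) (by omega) u hu0
      have h3 : 0 ≤ X (m+1+1) u := hpos (m+1+1) (by omega) u hu0
      have h4 : -ν * lam (m+1) ^ 2 * X (m+1) u = -c * X (m+1) u := by
        rw [hcdef, ← hlamsq]; ring
      have hT : 0 ≤ lam (m+1) ^ β * X (m+1) u * X (m+1+1) u :=
        mul_nonneg (mul_nonneg hlamb h2) h3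
      rw [h0, zero_mul, sub_le_iff_le_add, h4]
      linarith only [hT]
    have h := comp_exp hts hst hc le_rfl hderiv hd
    rw [zero_div] at h
    calc X (m+1) t ≤ Real.exp (-(c * (t - s))) * X (m+1) s + 0 := by linarith
      _ = Real.exp (-(c * (t - s))) * X (m+1) s := by ring
      _ ≤ K / (ν * η) * tp (-(↑(m+1) * (a + ε))) := hterm1
      _ ≤ (K / (ν * η) + K ^ 2 / ν * tp β) * tp (-(↑(m+1) * (a + ε))) := by
          apply mul_le_mul_of_nonneg_right _ (tp_pos _).le
          have : 0 ≤ K ^ 2 / ν * tp β := mul_nonneg (by positivity) (tp_pos _).le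
          linarith
  · -- n = m+1, m ≥ 1 : source term present
    set B' : ℝ := K ^ 2 * tp (↑m * (β - 2 * a)) with hB'def
    have hB' : 0 ≤ B' := mul_nonneg (sq_nonneg K) (tp_pos _).le
    have hd : ∀ u ∈ Icc s t, (-ν * lam (m+1) ^ 2 * X (m+1) u + lam m ^ β * (X m u) ^ 2
        - lam (m+1) ^ β * X (m+1) u * X (m+1+1) u) ≤ -c * X (m+1) u + B' := by
      intro u hu
      have hu0 : u ∈ Ici t₀ := le_trans hts hu.1
      have huI : u ∈ Icc s T := ⟨hu.1, le_trans hu.2 htI.2⟩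
      have h1 : 0 ≤ X m u := hpos m hm u hu0
      have h2 : X m u ≤ K * tp (-(↑m * a)) := hb m hm u huI
      have h3 : X m u ^ 2 ≤ (K * tp (-(↑m * a))) ^ 2 := by nlinarith
      have h4 : lam m ^ β = tp (↑m * β) := lam_rpow hm β
      have h5 : tp (↑m * β) * (K * tp (-(↑m * a))) ^ 2 = B' := by
        rw [hB'def, mul_pow, sq (tp (-(↑m * a))), ← tp_add, mul_left_comm, ← tp_add]
        congr 1
        ring
      have hsrc : lam m ^ β * X m u ^ 2 ≤ B' := by
        rw [h4, ← h5]
        exact mul_le_mul_of_nonneg_left h3 (tp_pos _).le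
      have h6 : 0 ≤ X (m+1) u := hpos (m+1) (by omega) u hu0
      have h7 : 0 ≤ X (m+1+1) u := hpos (m+1+1) (by omega) u hu0
      have h8 : -ν * lam (m+1) ^ 2 * X (m+1) u = -c * X (m+1) u := by
        rw [hcdef, ← hlamsq]; ring
      have hT : 0 ≤ lam (m+1) ^ β * X (m+1) u * X (m+1+1) u :=
        mul_nonneg (mul_nonneg hlamb h6) h7
      rw [sub_le_iff_le_add, h8]
      linarith only [hsrc, hT]
    have h := comp_exp hts hst hc hB' hderiv hd
    have hterm2 : B' / c ≤ K ^ 2 / ν * tp β * tp (-(↑(m+1) * (a + ε))) := by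
      rw [div_le_iff₀ hc, hcdef, hB'def]
      have key : ↑m * (β - 2 * a) ≤ β + -(↑(m+1) * (a + ε)) + 2 * (↑m + 1) := by
        have hm1 : (1:ℝ) ≤ (m:ℝ) := by exact_mod_cast hm
        push_cast
        nlinarith [mul_le_mul_of_nonneg_left hεa (by linarith : (0:ℝ) ≤ (m:ℝ) - 1)]
      calc K ^ 2 * tp (↑m * (β - 2 * a))
          ≤ K ^ 2 * tp (β + -(↑(m+1) * (a + ε)) + 2 * (↑m + 1)) := by
            apply mul_le_mul_of_nonneg_left (tp_mono key) (sq_nonneg K)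
        _ = K ^ 2 / ν * tp β * tp (-(↑(m+1) * (a + ε))) * (ν * tp (2 * (↑m + 1))) := by
            rw [tp_add, tp_add]
            field_simp
    calc X (m+1) t ≤ Real.exp (-(c * (t - s))) * X (m+1) s + B' / c := h
      _ ≤ K / (ν * η) * tp (-(↑(m+1) * (a + ε)))
          + K ^ 2 / ν * tp β * tp (-(↑(m+1) * (a + ε))) := add_le_add hterm1 hterm2
      _ = (K / (ν * η) + K ^ 2 / ν * tp β) * tp (-(↑(m+1) * (a + ε))) := by ring

lemma iterate_bootstrap {β ν ε t₀ : ℝ} {X : ℕ → ℝ → ℝ}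
    (hβ : 0 < β) (hν : 0 < ν) (hε : 0 < ε) (hε2 : ε ≤ 2)
    (hX : IsViscousSolution β ν (Ici t₀) X)
    (hpos : ∀ n, 1 ≤ n → ∀ t ∈ Ici t₀, 0 ≤ X n t) (k : ℕ) :
    ∀ s s' T : ℝ, t₀ ≤ s → s < s' → s' ≤ T →
      (∃ K, 0 ≤ K ∧ ∀ n, 1 ≤ n → ∀ t ∈ Icc s T, X n t ≤ K * tp (-(n * (β - 2 + ε)))) →
      ∃ K', 0 ≤ K' ∧ ∀ n, 1 ≤ n → ∀ t ∈ Icc s' T,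
        X n t ≤ K' * tp (-(n * (β - 2 + ε + k * ε))) := by
  induction k with
  | zero =>
    intro s s' T hts hss' hs'T ⟨K, hK, hb⟩
    refine ⟨K, hK, fun n hn t ht => ?_⟩
    have := hb n hn t ⟨le_trans hss'.le ht.1, ht.2⟩
    calc X n t ≤ K * tp (-(n * (β - 2 + ε))) := this
      _ = K * tp (-(n * (β - 2 + ε + (0:ℕ) * ε))) := by norm_num
  | succ k ih =>
    intro s s' T hts hss' hs'T hb
    set m : ℝ := (s + s') / 2 with hmdef
    have hsm : s < m := by rw [hmdef]; linarith
    have hms' : m < s' := by rw [hmdef]; linarith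
    obtain ⟨K₁, hK₁, hb₁⟩ := ih s m T hts hsm (le_trans hms'.le hs'T) hb
    have hεa : ε ≤ (β - 2 + ε + k * ε) + 2 - β := by
      have : (0:ℝ) ≤ (k:ℝ) * ε := by positivity
      linarith
    obtain ⟨K₂, hK₂, hb₂⟩ := bootstrap hβ hν hε hε2 hX hpos hεa
      (le_trans hts hsm.le) hms' hs'T hK₁ hb₁
    refine ⟨K₂, hK₂, fun n hn t ht => ?_⟩
    calc X n t ≤ K₂ * tp (-(n * (β - 2 + ε + k * ε + ε))) := hb₂ n hn t ht
      _ = K₂ * tp (-(n * (β - 2 + ε + (k+1:ℕ) * ε))) := by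
          congr 2
          push_cast
          ring

/-- a nonnegative weak solution on `[t₀,∞)` whose data at time `t₀`
are bounded in the `λ_n^{β-2+ε}` scaling is smooth on some interval `(t₀, t₀']`. -/
theorem local_smoothness
    (β ν ε t₀ : ℝ) (hβ : 0 < β) (hν : 0 < ν) (hε : 0 < ε) (ht₀ : 0 ≤ t₀)
    (X : ℕ → ℝ → ℝ) (hX : IsViscousSolution β ν (Set.Ici t₀) X)
    (hpos : ∀ n, 1 ≤ n → ∀ t ∈ Set.Ici t₀, 0 ≤ X n t)
    (hbd : ∃ C : ℝ, ∀ n, 1 ≤ n → lam n ^ (β - 2 + ε) * X n t₀ ≤ C) :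
    ∃ t₀' : ℝ, t₀ < t₀' ∧
      ∀ γ : ℝ, 0 < γ → ∀ t : ℝ, t₀ < t → t ≤ t₀' →
        ∃ C : ℝ, ∀ n, 1 ≤ n → lam n ^ γ * X n t ≤ C := by
  have hε' : 0 < min ε 2 := lt_min hε two_pos
  have hε'2 : min ε 2 ≤ 2 := min_le_right _ _
  have hε'ε : min ε 2 ≤ ε := min_le_left _ _
  obtain ⟨C, hC⟩ := hbd
  have hC0 : 0 ≤ C :=
    le_trans (mul_nonneg (Real.rpow_nonneg (lam_nonneg 1) _)
      (hpos 1 le_rfl t₀ self_mem_Ici)) (hC 1 le_rfl)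
  have hdata : ∀ n, 1 ≤ n → X n t₀ ≤ C * tp (-(n * (β - 2 + min ε 2))) := by
    intro n hn
    have hlam1 : (1:ℝ) ≤ lam n := by
      rw [lam_eq hn]
      calc (1:ℝ) = tp 0 := (Real.rpow_zero 2).symm
        _ ≤ tp n := tp_mono (by positivity)
    have h1 : lam n ^ (β - 2 + min ε 2) * X n t₀ ≤ C :=
      calc lam n ^ (β - 2 + min ε 2) * X n t₀ ≤ lam n ^ (β - 2 + ε) * X n t₀ :=
            mul_le_mul_of_nonneg_right
              (Real.rpow_le_rpow_of_exponent_le hlam1 (by linarith))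
              (hpos n hn t₀ self_mem_Ici)
        _ ≤ C := hC n hn
    rw [lam_rpow hn] at h1
    have h2 := tp_pos (↑n * (β - 2 + min ε 2))
    rw [tp_neg, ← div_eq_mul_inv, le_div_iff₀ h2, mul_comm]
    exact h1
  obtain ⟨δ, hδ, hstage1⟩ := stage1 hβ hν hε' hX hpos hC0 hdata
  refine ⟨t₀ + δ, by linarith, ?_⟩
  intro γ hγ t htt htT
  obtain ⟨k, hk⟩ := exists_nat_ge ((γ - (β - 2 + min ε 2)) / min ε 2)
  have hkε : γ ≤ β - 2 + min ε 2 + k * min ε 2 := by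
    rw [div_le_iff₀ hε'] at hk
    linarith
  obtain ⟨K', hK', hb'⟩ := iterate_bootstrap hβ hν hε' hε'2 hX hpos k t₀ t (t₀ + δ)
    le_rfl htt htT ⟨C + 1, by linarith, hstage1⟩
  refine ⟨K', fun n hn => ?_⟩
  have h1 := hb' n hn t ⟨le_rfl, htT⟩
  have h3 : 0 ≤ X n t := hpos n hn t (le_of_lt htt)
  have hexp : (↑n * γ) + -(↑n * (β - 2 + min ε 2 + k * min ε 2)) ≤ 0 := by
    have hn0 : (0:ℝ) ≤ (n:ℝ) := Nat.cast_nonneg n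
    nlinarith
  calc lam n ^ γ * X n t = tp (↑n * γ) * X n t := by rw [lam_rpow hn]
    _ ≤ tp (↑n * γ) * (K' * tp (-(↑n * (β - 2 + min ε 2 + k * min ε 2)))) :=
        mul_le_mul_of_nonneg_left h1 (tp_pos _).le
    _ = K' * tp ((↑n * γ) + -(↑n * (β - 2 + min ε 2 + k * min ε 2))) := by
        rw [tp_add]; ring
    _ ≤ K' * tp 0 := mul_le_mul_of_nonneg_left (tp_mono hexp) hK'
    _ = K' := by rw [show tp 0 = 1 from Real.rpow_zero 2, mul_one]
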